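/- The map S ↦ (b(a,S))_{a ≠ a₁}, sending a set S ∈ Δ to the vector of most preferred remaining items of the n−1 non-manipulators, is injective on Δ; consequently |Δ| ≤ m^{n−1}. -/
import Mathlib


/-- Items are `Fin m`; a ranking is a bijection `Fin m ≃ Fin m`
(`rk i` is the rank of item `i`; lower rank = more preferred).
`IsBest rk S b` says that `b` is the item of `I ∖ S` with minimum rank,
i.e. `b = b(a, S)` for an agent with ranking `rk`. -/
def IsBest {m : ℕ} (rk : Fin m ≃ Fin m) (S : Finset (Fin m)) (b : Fin m) : Prop :=
  b ∉ S ∧ ∀ j ∉ S, rk b ≤ rk j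

/-- `D rk i` : the set of items strictly preferred to `i` under the ranking `rk`. -/
def D {m : ℕ} (rk : Fin m ≃ Fin m) (i : Fin m) : Finset (Fin m) :=
  Finset.univ.filter fun j => rk j < rk i

/-- `Δ` : the family of proper subsets `S ⊊ I` with `⋃_{a ≠ a₁} D(a, b(a,S)) = S`
(here `b : A → Fin m` denotes the vector of best remaining items `a ↦ b(a,S)`,
which is uniquely determined by the `IsBest` condition). -/
def Delta {A : Type*} {m : ℕ} (a₁ : A) (rk : A → Fin m ≃ Fin m) :
    Set (Finset (Fin m)) :=
  {S | S ⊂ Finset.univ ∧ ∀ b : A → Fin m, (∀ a, IsBest (rk a) S (b a)) →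
    {j : Fin m | ∃ a, a ≠ a₁ ∧ j ∈ D (rk a) (b a)} = ↑S}

lemma exists_isBest {m : ℕ} (rk : Fin m ≃ Fin m) (S : Finset (Fin m))
    (h : S ⊂ Finset.univ) : ∃ b, IsBest rk S b := by
  have hne : (Sᶜ : Finset (Fin m)).Nonempty := by
    rw [Finset.nonempty_iff_ne_empty]
    intro hc
    exact h.ne (by simpa [Finset.compl_eq_empty_iff] using hc)
  obtain ⟨b, hb, hmin⟩ := Finset.exists_min_image Sᶜ rk hne
  exact ⟨b, Finset.mem_compl.mp hb, fun j hj => hmin j (Finset.mem_compl.mpr hj)⟩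

theorem statement2 {A : Type*} [Fintype A] {m : ℕ} (a₁ : A)
    (rk : A → Fin m ≃ Fin m) :
    (∀ S ∈ Delta a₁ rk, ∀ S' ∈ Delta a₁ rk,
      ∀ b b' : A → Fin m,
        (∀ a, IsBest (rk a) S (b a)) → (∀ a, IsBest (rk a) S' (b' a)) →
        (∀ a, a ≠ a₁ → b a = b' a) → S = S') ∧
    (Delta a₁ rk).ncard ≤ m ^ (Fintype.card A - 1) := by
  classical
  have inj : ∀ S ∈ Delta a₁ rk, ∀ S' ∈ Delta a₁ rk,
      ∀ b b' : A → Fin m,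
        (∀ a, IsBest (rk a) S (b a)) → (∀ a, IsBest (rk a) S' (b' a)) →
        (∀ a, a ≠ a₁ → b a = b' a) → S = S' := by
    intro S hS S' hS' b b' hb hb' hag
    have h1 := hS.2 b hb
    have h2 := hS'.2 b' hb'
    have heq : {j : Fin m | ∃ a, a ≠ a₁ ∧ j ∈ D (rk a) (b a)} =
        {j : Fin m | ∃ a, a ≠ a₁ ∧ j ∈ D (rk a) (b' a)} := by
      ext j
      constructor
      · rintro ⟨a, ha, hj⟩; exact ⟨a, ha, hag a ha ▸ hj⟩
      · rintro ⟨a, ha, hj⟩; exact ⟨a, ha, (hag a ha).symm ▸ hj⟩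
    exact Finset.coe_injective (h1.symm.trans (heq.trans h2))
  refine ⟨inj, ?_⟩
  rcases Nat.eq_zero_or_pos m with hm | hm
  · have : Delta a₁ rk = ∅ := by
      ext S
      simp only [Set.mem_empty_iff_false, iff_false]
      intro hS
      subst hm
      exact hS.1.ne (Finset.eq_univ_of_forall fun i => i.elim0)
    simp [this]
  · set f : Finset (Fin m) → ({a : A // a ≠ a₁} → Fin m) := fun S a =>
      if h : S ⊂ Finset.univ then (exists_isBest (rk a.1) S h).choose else ⟨0, hm⟩
      with hf
    have hcard : Fintype.card {a : A // a ≠ a₁} = Fintype.card A - 1 := by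
      have := Fintype.card_subtype_compl (fun a : A => a = a₁)
      simpa [Fintype.card_subtype_eq] using this
    have hinj : Set.InjOn f (Delta a₁ rk) := by
      intro S hS S' hS' hff
      set b : A → Fin m := fun a =>
        if h : S ⊂ Finset.univ then (exists_isBest (rk a) S h).choose else ⟨0, hm⟩
      set b' : A → Fin m := fun a =>
        if h : S' ⊂ Finset.univ then (exists_isBest (rk a) S' h).choose else ⟨0, hm⟩
      have hb : ∀ a, IsBest (rk a) S (b a) := fun a => by
        simp only [b, dif_pos hS.1]; exact (exists_isBest (rk a) S hS.1).choose_spec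
      have hb' : ∀ a, IsBest (rk a) S' (b' a) := fun a => by
        simp only [b', dif_pos hS'.1]; exact (exists_isBest (rk a) S' hS'.1).choose_spec
      refine inj S hS S' hS' b b' hb hb' fun a ha => ?_
      have := congrFun hff ⟨a, ha⟩
      simpa [hf, b, b'] using this
    calc (Delta a₁ rk).ncard ≤ (Set.univ : Set ({a : A // a ≠ a₁} → Fin m)).ncard :=
          Set.ncard_le_ncard_of_injOn f (fun _ _ => Set.mem_univ _) hinj (Set.finite_univ)
      _ = m ^ (Fintype.card A - 1) := by
          rw [Set.ncard_univ, Nat.card_eq_fintype_card, Fintype.card_fun]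
          simp [hcard]
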